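/- Let ℂ_{ε,σ} and ℂ_{ε',σ'} be the one-dimensional Hermitian RFAs on ℂ determined by nonzero ε, ε' ∈ ℂ and σ, σ' ∈ ℝ. If φ : ℂ_{ε,σ} → ℂ_{ε',σ'} is a morphism of RFAs, then σ = σ' and φ(1) = ε/ε', which has modulus 1. -/

import Mathlib

/-- Any morphism of regularised Frobenius algebras `φ : ℂ_{ε,σ} → ℂ_{ε',σ'}` between
one-dimensional Hermitian RFAs satisfies `σ = σ'` and `φ(1) = ε/ε'`, a number of modulus `1`.
Here `φ` is identified with the scalar `z = φ(1)`, and the RFA morphism conditions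
(compatibility with unit, counit, product and coproduct) are spelled out for the structure
maps `ε_a(1) = e^{-aσ}ε`, `η_a(1) = e^{-aσ}ε*`, `μ_a(1⊗1) = e^{-aσ}/ε*`,
`Δ_a(1) = (e^{-aσ}/ε)·1⊗1`. -/
theorem stmt12 (ε ε' z : ℂ) (hε : ε ≠ 0) (hε' : ε' ≠ 0) (σ σ' : ℝ)
    (hη : ∀ a : ℝ, 0 < a →
      z * ((Real.exp (-(a * σ)) : ℂ) * (starRingEnd ℂ) ε)
        = (Real.exp (-(a * σ')) : ℂ) * (starRingEnd ℂ) ε')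
    (hcounit : ∀ a : ℝ, 0 < a →
      (Real.exp (-(a * σ')) : ℂ) * ε' * z = (Real.exp (-(a * σ)) : ℂ) * ε)
    (hμ : ∀ a : ℝ, 0 < a →
      z * ((Real.exp (-(a * σ)) : ℂ) / (starRingEnd ℂ) ε)
        = ((Real.exp (-(a * σ')) : ℂ) / (starRingEnd ℂ) ε') * (z * z))
    (hΔ : ∀ a : ℝ, 0 < a →
      (z * z) * ((Real.exp (-(a * σ)) : ℂ) / ε)
        = ((Real.exp (-(a * σ')) : ℂ) / ε') * z) :
    σ = σ' ∧ z = ε / ε' ∧ ‖z‖ = 1 := by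
  have h1 := hcounit 1 one_pos
  have h2 := hcounit 2 two_pos
  have hη1 := hη 1 one_pos
  set A : ℂ := (Real.exp (-(1 * σ)) : ℂ) with hAdef
  set A' : ℂ := (Real.exp (-(1 * σ')) : ℂ) with hA'def
  have hA : A ≠ 0 := Complex.ofReal_ne_zero.mpr (Real.exp_ne_zero _)
  have hA' : A' ≠ 0 := Complex.ofReal_ne_zero.mpr (Real.exp_ne_zero _)
  have hB : (Real.exp (-(2 * σ)) : ℂ) = A ^ 2 := by
    rw [hAdef]; norm_cast; rw [sq, ← Real.exp_add]; ring_nf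
  have hB' : (Real.exp (-(2 * σ')) : ℂ) = A' ^ 2 := by
    rw [hA'def]; norm_cast; rw [sq, ← Real.exp_add]; ring_nf
  rw [hB, hB'] at h2
  have hz : z ≠ 0 := by
    intro h
    rw [h, mul_zero] at h1
    exact hA (by simpa [hε] using h1.symm)
  have key : ε' * z = ε := by
    have k1 : A' ^ 2 * ε' * (ε' * z * z) = A' ^ 2 * ε' * (ε * z) := by
      linear_combination (A' * ε' * z + A * ε) * h1 - ε * h2
    have k2 : ε' * z * z = ε * z :=
      mul_left_cancel₀ (mul_ne_zero (pow_ne_zero 2 hA') hε') k1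
    exact mul_right_cancel₀ hz k2
  have hzval : z = ε / ε' := by
    field_simp
    linear_combination key
  have hAA : A = A' := by
    have : A' * ε = A * ε := by
      calc A' * ε = A' * (ε' * z) := by rw [key]
        _ = A' * ε' * z := by ring
        _ = A * ε := h1
    exact (mul_right_cancel₀ hε this).symm
  have hσ : σ = σ' := by
    have := Complex.ofReal_inj.mp (hAdef ▸ hA'def ▸ hAA)
    have := Real.exp_injective this
    linarith
  have habs : ‖z‖ = 1 := by
    have hc : z * (starRingEnd ℂ) ε = (starRingEnd ℂ) ε' := by
      rw [hAA] at hη1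
      have h3 : A' * (z * (starRingEnd ℂ) ε) = A' * (starRingEnd ℂ) ε' := by
        rw [← hη1]; ring
      exact mul_left_cancel₀ hA' h3
    have hkc : (starRingEnd ℂ) ε' * (starRingEnd ℂ) z = (starRingEnd ℂ) ε := by
      rw [← map_mul, key]
    have hone : z * (starRingEnd ℂ) z = 1 := by
      have hcε : (starRingEnd ℂ) ε ≠ 0 := by
        simpa using hε
      have : (starRingEnd ℂ) ε * (z * (starRingEnd ℂ) z) = (starRingEnd ℂ) ε * 1 := by
        calc (starRingEnd ℂ) ε * (z * (starRingEnd ℂ) z)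
            = (z * (starRingEnd ℂ) ε) * (starRingEnd ℂ) z := by ring
          _ = (starRingEnd ℂ) ε' * (starRingEnd ℂ) z := by rw [hc]
          _ = (starRingEnd ℂ) ε := hkc
          _ = (starRingEnd ℂ) ε * 1 := by ring
      exact mul_left_cancel₀ hcε this
    have hnsq : Complex.normSq z = 1 := by
      have := Complex.mul_conj z
      rw [hone] at this
      exact_mod_cast this.symm
    have : ‖z‖ ^ 2 = 1 := by
      rw [Complex.sq_norm, hnsq]
    nlinarith [norm_nonneg z, this]
  exact ⟨hσ, hzval, habs⟩
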